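/- Let X and Y be topological spaces such that the collection of all α^m-open subsets of Y is closed under arbitrary unions, and let f : X → Y be a map satisfying f(int(A)) ⊆ I_{α^m}(f(A)) for every subset A of X. Then for each x ∈ X and each neighborhood U of x in X, there exists an α^m-neighborhood W of f(x) in Y such that W ⊆ f(U). -/

import Mathlib

open Set

def AlphaOpen {X : Type*} [TopologicalSpace X] (A : Set X) : Prop :=
  A ⊆ interior (closure (interior A))

def AlphaClosed {X : Type*} [TopologicalSpace X] (A : Set X) : Prop :=
  AlphaOpen Aᶜ

def AlphaMClosed {X : Type*} [TopologicalSpace X] (A : Set X) : Prop :=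
  ∀ U : Set X, AlphaOpen U → A ⊆ U → interior (closure A) ⊆ U

def AlphaMOpen {X : Type*} [TopologicalSpace X] (A : Set X) : Prop :=
  AlphaMClosed Aᶜ

def AlphaMClosedMap {X Y : Type*} [TopologicalSpace X] [TopologicalSpace Y] (f : X → Y) : Prop :=
  ∀ F : Set X, IsClosed F → AlphaMClosed (f '' F)

def AlphaMOpenMap {X Y : Type*} [TopologicalSpace X] [TopologicalSpace Y] (f : X → Y) : Prop :=
  ∀ U : Set X, IsOpen U → AlphaMOpen (f '' U)

def AlphaMNbhd {X : Type*} [TopologicalSpace X] (N : Set X) (x : X) : Prop :=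
  ∃ G : Set X, AlphaMOpen G ∧ x ∈ G ∧ G ⊆ N

def alphaMClosure {X : Type*} [TopologicalSpace X] (A : Set X) : Set X :=
  ⋂₀ {F : Set X | AlphaMClosed F ∧ A ⊆ F}

def alphaMInterior {X : Type*} [TopologicalSpace X] (A : Set X) : Set X :=
  ⋃₀ {G : Set X | AlphaMOpen G ∧ G ⊆ A}

theorem stmt10 {X Y : Type*} [TopologicalSpace X] [TopologicalSpace Y]
    (hY : ∀ 𝒮 : Set (Set Y), (∀ s ∈ 𝒮, AlphaMOpen s) → AlphaMOpen (⋃₀ 𝒮))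
    (f : X → Y)
    (hf : ∀ A : Set X, f '' interior A ⊆ alphaMInterior (f '' A)) :
    ∀ x : X, ∀ U : Set X, (∃ G : Set X, IsOpen G ∧ x ∈ G ∧ G ⊆ U) →
      ∃ W : Set Y, AlphaMNbhd W (f x) ∧ W ⊆ f '' U := by
  rintro x U ⟨G, hG, hxG, hGU⟩
  refine ⟨alphaMInterior (f '' G), ⟨alphaMInterior (f '' G), ?_, ?_, subset_rfl⟩, ?_⟩
  · exact hY _ (fun s hs => hs.1)
  · exact hf G ⟨x, by rwa [hG.interior_eq], rfl⟩
  · exact (sUnion_subset fun s hs => hs.2).trans (image_mono (f := f) hGU)
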